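/- Fix ν ∈ (0,1] and suppose the hazard function H = −ln(1−F) is NOT star-shaped on S_ν = {x : x ≤ F^{-1}(1−ν)}. Define F^ℰ_ν = ℰ∘(ℰ^{-1}∘F|_{S_ν})_* and d = sup_{S_ν}(F − F^ℰ_ν) > 0. Let 𝔽^ℰ_{n,ν} = ℰ∘(ℍ_n|_{S_{n,ν}})_* with ℍ_n = −ln(1−𝔽_n) and S_{n,ν} = {x ≤ 𝔽_n^{-1}(1−ν)}. Then for every ε ∈ (0,d), P( sup_{S_{n,ν}} |𝔽_n(x) − 𝔽^ℰ_{n,ν}(x)| ≥ d − ε ) → 1 as n → ∞. -/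

import Mathlib

open MeasureTheory ProbabilityTheory Set Filter

noncomputable section

/-- Left-continuous generalized inverse (quantile function) of `F`. -/
def quantile (F : ℝ → ℝ) (p : ℝ) : ℝ := sInf {x : ℝ | p ≤ F x}

/-- CDF of a measure on `ℝ`. -/
def cdfOf (μ : Measure ℝ) : ℝ → ℝ := fun x => (μ (Iic x)).toReal

/-- Empirical CDF of a sample. -/
def empCDF {n : ℕ} (xs : Fin n → ℝ) : ℝ → ℝ :=
  fun t => ((Finset.univ.filter fun i => xs i ≤ t).card : ℝ) / n

/-- The `i`-th order statistic (1-based) of a sample, as the empirical quantile at `i/n`. -/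
def orderStat {n : ℕ} (xs : Fin n → ℝ) (i : ℕ) : ℝ := quantile (empCDF xs) (i / n)

/-- A non-negative, non-decreasing function `φ` is star-shaped if `φ x / x` is non-decreasing
on `x > 0`. -/
def StarShapedFn (φ : ℝ → ℝ) : Prop :=
  Monotone φ ∧ (∀ x, 0 ≤ φ x) ∧ ∀ x y : ℝ, 0 < x → x ≤ y → φ x / x ≤ φ y / y

/-- Star-shapedness of `f` restricted to the set `S`: `f x / x` is non-decreasing on `S`. -/
def StarShapedOnSet (S : Set ℝ) (f : ℝ → ℝ) : Prop :=
  ∀ x ∈ S, ∀ y ∈ S, 0 < x → x ≤ y → f x / x ≤ f y / y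

/-- Greatest star-shaped minorant of the restriction of `φ` to `S`: the pointwise supremum of
all star-shaped functions lying below `φ` on `S`. -/
def gsmOn (φ : ℝ → ℝ) (S : Set ℝ) : ℝ → ℝ :=
  fun x => sSup {y : ℝ | ∃ ψ : ℝ → ℝ, StarShapedFn ψ ∧ (∀ t ∈ S, ψ t ≤ φ t) ∧ y = ψ x}

/-- The unit exponential CDF `ℰ(x) = 1 − e^{−x}`. -/
def expCDF (x : ℝ) : ℝ := 1 - Real.exp (-x)

/-- The empirical hazard function `ℍₙ = −ln(1 − 𝔽ₙ)`. -/
def hazEmp {n : ℕ} (xs : Fin n → ℝ) : ℝ → ℝ := fun t => -Real.log (1 - empCDF xs t)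

/-- `n_ν`, the (1-based) index with `X₍n_ν₎ = 𝔽ₙ⁻¹(1 − ν)`. -/
def nNu (ν : ℝ) (n : ℕ) : ℕ := ⌈(1 - ν) * n⌉₊

/-- The restricted test statistic
`T_*^ν(𝔽ₙ) = sup_{i=2,…,n_ν−1} ( (i−1)/n − ℰ∘(ℍₙ|_{S_{n,ν}})_*(X₍ᵢ₎) )`. -/
def TnuStat (ν : ℝ) {n : ℕ} (xs : Fin n → ℝ) : ℝ :=
  sSup {v : ℝ | ∃ i : ℕ, 2 ≤ i ∧ i ≤ nNu ν n - 1 ∧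
    v = ((i : ℝ) - 1) / n -
      expCDF (gsmOn (hazEmp xs) (Iic (quantile (empCDF xs) (1 - ν))) (orderStat xs i))}

/-- `Xs` is an i.i.d. sample from the distribution `μ`. -/
def IsIIDSample {Ω : Type*} [MeasurableSpace Ω] (P : Measure Ω) (μ : Measure ℝ)
    {n : ℕ} (Xs : Fin n → Ω → ℝ) : Prop :=
  (∀ i, Measurable (Xs i)) ∧ iIndepFun Xs P ∧ ∀ i, P.map (Xs i) = μ

open Topology

namespace Stmt19Aux

lemma star_zero : StarShapedFn (fun _ => (0:ℝ)) :=
  ⟨monotone_const, fun _ => le_rfl, fun x y hx _ => by simp⟩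

lemma gsmSet_zero_mem (φ : ℝ → ℝ) (S : Set ℝ) (h0 : ∀ t ∈ S, 0 ≤ φ t) (x : ℝ) :
    (0:ℝ) ∈ {y : ℝ | ∃ ψ : ℝ → ℝ, StarShapedFn ψ ∧ (∀ t ∈ S, ψ t ≤ φ t) ∧ y = ψ x} :=
  ⟨fun _ => 0, star_zero, fun t ht => h0 t ht, rfl⟩

lemma gsmSet_bddAbove (φ : ℝ → ℝ) (c : ℝ) {x : ℝ} (hx : x ≤ c) :
    BddAbove {y : ℝ | ∃ ψ : ℝ → ℝ, StarShapedFn ψ ∧ (∀ t ∈ Iic c, ψ t ≤ φ t) ∧ y = ψ x} := by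
  refine ⟨φ c, ?_⟩
  rintro y ⟨ψ, ⟨hmono, _, _⟩, hle, rfl⟩
  exact (hmono hx).trans (hle c self_mem_Iic)

lemma gsmOn_nonneg (φ : ℝ → ℝ) (c : ℝ) (h0 : ∀ t ∈ Iic c, 0 ≤ φ t) {x : ℝ} (hx : x ≤ c) :
    0 ≤ gsmOn φ (Iic c) x :=
  le_csSup (gsmSet_bddAbove φ c hx) (gsmSet_zero_mem φ (Iic c) h0 x)

lemma gsmOn_mono (φ : ℝ → ℝ) (c : ℝ) (h0 : ∀ t ∈ Iic c, 0 ≤ φ t) {x y : ℝ}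
    (hxy : x ≤ y) (hy : y ≤ c) : gsmOn φ (Iic c) x ≤ gsmOn φ (Iic c) y := by
  refine csSup_le ⟨0, gsmSet_zero_mem φ (Iic c) h0 x⟩ ?_
  rintro v ⟨ψ, hstar, hle, rfl⟩
  exact le_trans (hstar.1 hxy) (le_csSup (gsmSet_bddAbove φ c hy) ⟨ψ, hstar, hle, rfl⟩)

lemma gsmOn_le_ratio (φ : ℝ → ℝ) (c : ℝ) (h0 : ∀ t ∈ Iic c, 0 ≤ φ t) {x y : ℝ}
    (hx : 0 < x) (hxy : x ≤ y) (hy : y ≤ c) :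
    gsmOn φ (Iic c) x ≤ x * (φ y / y) := by
  refine csSup_le ⟨0, gsmSet_zero_mem φ (Iic c) h0 x⟩ ?_
  rintro v ⟨ψ, hstar, hle, rfl⟩
  have h1 : ψ x / x ≤ ψ y / y := hstar.2.2 x y hx hxy
  have hy0 : 0 < y := lt_of_lt_of_le hx hxy
  have h2 : ψ y / y ≤ φ y / y := div_le_div_of_nonneg_right (hle y hy) hy0.le
  have h3 : ψ x / x ≤ φ y / y := h1.trans h2
  calc ψ x = (ψ x / x) * x := by field_simp
  _ ≤ (φ y / y) * x := mul_le_mul_of_nonneg_right h3 hx.le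
  _ = x * (φ y / y) := mul_comm _ _


lemma expCDF_mono : Monotone expCDF := fun a b hab => by
  simp only [expCDF, sub_le_sub_iff_left]
  exact Real.exp_le_exp.mpr (neg_le_neg hab)

lemma expCDF_le_one (x : ℝ) : expCDF x ≤ 1 := by
  simp only [expCDF, sub_le_self_iff]
  exact (Real.exp_pos _).le

lemma expCDF_nonneg {x : ℝ} (hx : 0 ≤ x) : 0 ≤ expCDF x := by
  simp only [expCDF, sub_nonneg]
  exact Real.exp_le_one_iff.mpr (neg_nonpos.mpr hx)

lemma expCDF_strictMono : StrictMono expCDF := fun a b hab => by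
  simp only [expCDF, sub_lt_sub_iff_left]
  exact Real.exp_lt_exp.mpr (neg_lt_neg hab)

lemma expCDF_add_le {a c : ℝ} (ha : 0 ≤ a) (hc : 0 ≤ c) :
    expCDF (a + c) ≤ expCDF a + c := by
  simp only [expCDF]
  have h1 : Real.exp (-a) ≤ 1 := Real.exp_le_one_iff.mpr (neg_nonpos.mpr ha)
  have h2 : 1 - c ≤ Real.exp (-c) := by
    have := Real.add_one_le_exp (-c); linarith
  have h3 : Real.exp (-(a+c)) = Real.exp (-a) * Real.exp (-c) := by
    rw [← Real.exp_add]; ring_nf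
  nlinarith [Real.exp_pos (-a), Real.exp_pos (-c)]

lemma expCDF_neg_log {p : ℝ} (hp : p < 1) : expCDF (-Real.log (1 - p)) = p := by
  simp only [expCDF, neg_neg]
  rw [Real.exp_log (by linarith)]; ring

lemma empCDF_nonneg {n : ℕ} (xs : Fin n → ℝ) (t : ℝ) : 0 ≤ empCDF xs t :=
  div_nonneg (Nat.cast_nonneg _) (Nat.cast_nonneg _)

lemma empCDF_le_one {n : ℕ} (xs : Fin n → ℝ) (t : ℝ) : empCDF xs t ≤ 1 := by
  rcases Nat.eq_zero_or_pos n with h | h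
  · subst h; simp [empCDF]
  · rw [empCDF, div_le_one (by exact_mod_cast h)]
    have := Finset.card_filter_le (Finset.univ : Finset (Fin n)) (fun i => xs i ≤ t)
    simp only [Finset.card_univ, Fintype.card_fin] at this
    exact_mod_cast this

lemma empCDF_mono {n : ℕ} (xs : Fin n → ℝ) : Monotone (empCDF xs) := by
  intro a b hab
  unfold empCDF
  rcases Nat.eq_zero_or_pos n with h | h
  · subst h; simp
  · have hsub : (Finset.univ.filter fun i => xs i ≤ a) ⊆ Finset.univ.filter fun i => xs i ≤ b := by
      intro i hi
      simp only [Finset.mem_filter] at *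
      exact ⟨hi.1, hi.2.trans hab⟩
    exact div_le_div_of_nonneg_right (by exact_mod_cast Finset.card_le_card hsub)
      (Nat.cast_nonneg n)

lemma hazEmp_nonneg {n : ℕ} (xs : Fin n → ℝ) (t : ℝ) : 0 ≤ hazEmp xs t := by
  unfold hazEmp
  rw [neg_nonneg]
  exact Real.log_nonpos (by linarith [empCDF_le_one xs t]) (by linarith [empCDF_nonneg xs t])

lemma empCDF_max {n : ℕ} (hn : 0 < n) (xs : Fin n → ℝ) :
    ∃ M, empCDF xs M = 1 := by
  haveI : Nonempty (Fin n) := ⟨⟨0, hn⟩⟩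
  refine ⟨Finset.univ.sup' (Finset.univ_nonempty) xs, ?_⟩
  have : (Finset.univ.filter fun i => xs i ≤ Finset.univ.sup' Finset.univ_nonempty xs)
      = Finset.univ := by
    apply Finset.filter_true_of_mem
    intro i _
    exact Finset.le_sup' xs (Finset.mem_univ i)
  rw [empCDF, this, Finset.card_univ, Fintype.card_fin]
  exact div_self (by exact_mod_cast hn.ne')

lemma le_quantile_emp {n : ℕ} (hn : 0 < n) (xs : Fin n → ℝ) {p y : ℝ}
    (hp : p ≤ 1) (hy : empCDF xs y < p) : y ≤ quantile (empCDF xs) p := by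
  obtain ⟨M, hM⟩ := empCDF_max hn xs
  refine le_csInf ⟨M, by simp [mem_setOf_eq, hM, hp]⟩ ?_
  intro b hb
  by_contra hby
  push_neg at hby
  exact absurd (lt_of_le_of_lt (le_trans hb (empCDF_mono xs hby.le)) hy) (lt_irrefl _)


lemma cheb {Ω : Type*} [MeasurableSpace Ω] (P : Measure Ω) [IsProbabilityMeasure P]
    (μ : Measure ℝ) [IsProbabilityMeasure μ] {n : ℕ} (hn : 0 < n)
    (X : Fin n → Ω → ℝ) (hiid : IsIIDSample P μ X) (t : ℝ) {η : ℝ} (hη : 0 < η) :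
    P {ω | η ≤ |empCDF (fun i => X i ω) t - cdfOf μ t|} ≤ ENNReal.ofReal (1 / (n * η^2)) := by
  classical
  obtain ⟨hmeas, hindep, hmap⟩ := hiid
  set f : ℝ → ℝ := (Iic t).indicator 1 with hf_def
  have hf : Measurable f := measurable_one.indicator measurableSet_Iic
  set Y : Fin n → Ω → ℝ := fun i => f ∘ X i with hY_def
  have hYmeas : ∀ i, Measurable (Y i) := fun i => hf.comp (hmeas i)
  have hYbd : ∀ i ω, ‖Y i ω‖ ≤ 1 := by
    intro i ω
    simp only [hY_def, Function.comp_apply, hf_def, indicator]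
    split_ifs <;> simp
  have hmem : ∀ i, MemLp (Y i) 2 P := fun i =>
    MemLp.of_bound (hYmeas i).aestronglyMeasurable 1 (ae_of_all _ (hYbd i))
  set S : Ω → ℝ := fun ω => ∑ i, Y i ω with hS_def
  have hSeq : S = ∑ i, Y i := by ext ω; simp [hS_def]
  have hSmem : MemLp S 2 P := by
    rw [hSeq]
    exact memLp_finsetSum' Finset.univ (fun i _ => hmem i)
  have hEY : ∀ i, ∫ ω, Y i ω ∂P = cdfOf μ t := by
    intro i
    have h1 : ∫ x, f x ∂(P.map (X i)) = ∫ ω, f (X i ω) ∂P :=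
      integral_map (hmeas i).aemeasurable hf.aestronglyMeasurable
    have h2 : ∫ x, f x ∂μ = ∫ ω, Y i ω ∂P := by
      rw [← hmap i, h1]; rfl
    rw [← h2, hf_def, integral_indicator_one measurableSet_Iic]; rfl
  have hES : ∫ ω, S ω ∂P = n * cdfOf μ t := by
    rw [hS_def]
    rw [integral_finset_sum _ (fun i (_ : i ∈ Finset.univ) => (hmem i).integrable one_le_two)]
    simp [hEY, mul_comm]
  have hvar_le : ∀ i, variance (Y i) P ≤ 1 := by
    intro i
    refine (variance_le_expectation_sq (hYmeas i).aestronglyMeasurable).trans ?_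
    have h1 : ∀ ω, (Y i ω)^2 ≤ 1 := fun ω => by
      have h := hYbd i ω
      rw [Real.norm_eq_abs] at h
      nlinarith [neg_abs_le (Y i ω), le_abs_self (Y i ω)]
    calc (∫ ω, ((Y i) ^ 2) ω ∂P) ≤ ∫ _ω, (1:ℝ) ∂P := by
          refine integral_mono ?_ (integrable_const 1) ?_
          · exact (hmem i).integrable_sq
          · intro ω; simpa using h1 ω
    _ = 1 := by simp
  have hvarS : variance S P ≤ n := by
    rw [hSeq, IndepFun.variance_sum (fun i _ => hmem i)
      (fun i _ j _ hij => (hindep.indepFun hij).comp hf hf)]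
    calc ∑ _i : Fin n, variance (Y _i) P ≤ ∑ _i : Fin n, (1:ℝ) :=
          Finset.sum_le_sum (fun i _ => hvar_le i)
    _ = n := by simp
  have hcheb := meas_ge_le_variance_div_sq (μ := P) hSmem (c := n * η)
    (by positivity)
  have hsub : {ω | η ≤ |empCDF (fun i => X i ω) t - cdfOf μ t|}
      ⊆ {ω | (n:ℝ) * η ≤ |S ω - P[S]|} := by
    intro ω hω
    simp only [mem_setOf_eq] at hω ⊢
    have hn' : (0:ℝ) < n := by exact_mod_cast hn
    have hemp : empCDF (fun i => X i ω) t = S ω / n := by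
      rw [empCDF, hS_def]
      congr 1
      rw [← Finset.sum_boole]
      apply Finset.sum_congr rfl
      intro i _
      simp [hY_def, hf_def, Set.indicator, mem_Iic]
    have hPS : P[S] = (n:ℝ) * cdfOf μ t := hES
    rw [hPS]
    have habs : |S ω - (n:ℝ) * cdfOf μ t|
        = (n:ℝ) * |empCDF (fun i => X i ω) t - cdfOf μ t| := by
      rw [hemp, ← abs_of_pos hn', ← abs_mul]
      congr 1
      field_simp
      rw [abs_of_pos hn']; ring
    rw [habs]
    exact mul_le_mul_of_nonneg_left hω hn'.le
  refine (measure_mono hsub).trans (hcheb.trans ?_)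
  apply ENNReal.ofReal_le_ofReal
  have hn' : (0:ℝ) < n := by exact_mod_cast hn
  rw [div_le_div_iff₀ (by positivity) (by positivity)]
  nlinarith [variance_nonneg S P, sq_nonneg η, sq_nonneg ((n:ℝ)*η)]


lemma empCDF_measurable {Ω : Type*} [MeasurableSpace Ω] {n : ℕ} (X : Fin n → Ω → ℝ)
    (hmeas : ∀ i, Measurable (X i)) (t : ℝ) :
    Measurable fun ω => empCDF (fun i => X i ω) t := by
  classical
  have heq : (fun ω => empCDF (fun i => X i ω) t)
      = fun ω => (∑ i : Fin n, if X i ω ≤ t then (1:ℝ) else 0) / n := by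
    funext ω
    rw [empCDF, Finset.sum_boole]
  rw [heq]
  apply Measurable.div_const
  apply Finset.measurable_sum
  intro i _
  exact Measurable.ite (measurableSet_le (hmeas i) measurable_const)
    measurable_const measurable_const

lemma cdf_mono (μ : Measure ℝ) [IsProbabilityMeasure μ] : Monotone (cdfOf μ) :=
  fun a b hab => ENNReal.toReal_mono (measure_ne_top μ _)
    (measure_mono (Iic_subset_Iic.mpr hab))

lemma cdf_le_one (μ : Measure ℝ) [IsProbabilityMeasure μ] (x : ℝ) : cdfOf μ x ≤ 1 := by
  have h := prob_le_one (μ := μ) (s := Iic x)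
  have := ENNReal.toReal_mono ENNReal.one_ne_top h
  simpa [cdfOf] using this

lemma cdf_tendsto (μ : Measure ℝ) [IsProbabilityMeasure μ] :
    Tendsto (cdfOf μ) atTop (𝓝 1) := by
  have h := tendsto_measure_Iic_atTop (μ := μ)
  have h2 := (ENNReal.tendsto_toReal (by simp : μ univ ≠ ⊤)).comp h
  exact (by simpa [Function.comp_def, measure_univ] using h2 :
    Tendsto (fun x => (μ (Iic x)).toReal) atTop (𝓝 1))

end Stmt19Aux

open Stmt19Aux

/-- if the hazard function `H = −ln(1−F)` is NOT star-shaped on `S_ν`,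
then, with `F^ℰ_ν = ℰ∘(ℰ⁻¹∘F|_{S_ν})_*` and `d = sup_{S_ν}(F − F^ℰ_ν) > 0`, for every
`ε ∈ (0,d)` one has `P( sup_{S_{n,ν}} |𝔽ₙ − 𝔽^ℰ_{n,ν}| ≥ d − ε ) → 1` as `n → ∞`. -/
theorem stmt19 {Ω : Type*} [MeasurableSpace Ω] (P : Measure Ω) [IsProbabilityMeasure P]
    (μ : Measure ℝ) [IsProbabilityMeasure μ]
    (hFcont : Continuous (cdfOf μ)) (hF0 : cdfOf μ 0 = 0)
    (ν : ℝ) (hν0 : 0 < ν) (hν1 : ν ≤ 1)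
    (hnull : ¬ StarShapedOnSet (Iic (quantile (cdfOf μ) (1 - ν)))
      (fun x => -Real.log (1 - cdfOf μ x)))
    (Xs : (n : ℕ) → Fin n → Ω → ℝ) (hXs : ∀ n, IsIIDSample P μ (Xs n))
    (d : ℝ)
    (hd : d = ⨆ x : (Iic (quantile (cdfOf μ) (1 - ν)) : Set ℝ),
      (cdfOf μ x - expCDF (gsmOn (fun t => -Real.log (1 - cdfOf μ t))
        (Iic (quantile (cdfOf μ) (1 - ν))) x))) :
    0 < d ∧ ∀ ε : ℝ, 0 < ε → ε < d →
      Tendsto (fun n : ℕ => (P {ω | d - ε ≤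
          ⨆ x : (Iic (quantile (empCDF fun i => Xs n i ω) (1 - ν)) : Set ℝ),
            |empCDF (fun i => Xs n i ω) x -
              expCDF (gsmOn (hazEmp fun i => Xs n i ω)
                (Iic (quantile (empCDF fun i => Xs n i ω) (1 - ν))) x)|}).toReal)
        atTop (nhds 1) := by
  classical
  set F := cdfOf μ with hFdef
  set q := quantile F (1 - ν) with hqdef
  set H : ℝ → ℝ := fun t => -Real.log (1 - F t) with hHdef
  set G := gsmOn H (Iic q) with hGdef
  have Fmono : Monotone F := cdf_mono μ
  have Fnn : ∀ x, 0 ≤ F x := fun x => ENNReal.toReal_nonneg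
  have Fle1 : ∀ x, F x ≤ 1 := fun x => cdf_le_one μ x
  have Fneg : ∀ x ≤ 0, F x = 0 := fun x hx => le_antisymm (hF0 ▸ Fmono hx) (Fnn x)
  have Hnn : ∀ x, 0 ≤ H x := by
    intro x
    rw [hHdef]
    simp only [neg_nonneg]
    exact Real.log_nonpos (by linarith [Fle1 x]) (by linarith [Fnn x])
  -- witnesses of non-star-shapedness
  unfold StarShapedOnSet at hnull
  push_neg at hnull
  obtain ⟨a, haS, b, hbS, ha0, hab, hba⟩ := hnull
  have hq0 : 0 < q := lt_of_lt_of_le ha0 haS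
  have hν1' : ν < 1 := by
    rcases lt_or_eq_of_le hν1 with h | h
    · exact h
    · exfalso
      have huniv : {x : ℝ | 1 - ν ≤ F x} = univ := by
        apply eq_univ_of_forall
        intro x
        simp only [mem_setOf_eq, ← h]
        linarith [Fnn x]
      have hnb : ¬ BddBelow (univ : Set ℝ) := by
        rintro ⟨c, hc⟩
        have := hc (mem_univ (c - 1))
        linarith
      have : q = 0 := by
        rw [hqdef, quantile, huniv, Real.sInf_of_not_bddBelow hnb]
      linarith
  -- the set defining the quantile
  have hAq : q = sInf {x : ℝ | 1 - ν ≤ F x} := hqdef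
  obtain ⟨xA, hxA⟩ : ∃ x, 1 - ν < F x :=
    ((cdf_tendsto μ).eventually (eventually_gt_nhds (by linarith : 1 - ν < 1))).exists
  have hAne : {x : ℝ | 1 - ν ≤ F x}.Nonempty := ⟨xA, le_of_lt hxA⟩
  have hAbdd : BddBelow {x : ℝ | 1 - ν ≤ F x} := by
    refine ⟨0, ?_⟩
    intro x hx
    by_contra hc
    push_neg at hc
    have := Fneg x hc.le
    simp only [mem_setOf_eq, this] at hx
    linarith
  have hAclosed : IsClosed {x : ℝ | 1 - ν ≤ F x} := by
    have : {x : ℝ | 1 - ν ≤ F x} = F ⁻¹' Ici (1 - ν) := rfl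
    rw [this]
    exact IsClosed.preimage hFcont isClosed_Ici
  have hqA : q ∈ {x : ℝ | 1 - ν ≤ F x} := by
    rw [hAq]; exact hAclosed.csInf_mem hAne hAbdd
  have hFlt : ∀ x < q, F x < 1 - ν := by
    intro x hx
    by_contra hcon
    push_neg at hcon
    exact absurd (hAq ▸ csInf_le hAbdd hcon) (not_le.mpr hx)
  have hFq : F q = 1 - ν := by
    refine le_antisymm ?_ hqA
    have htd : Tendsto F (𝓝[<] q) (𝓝 (F q)) :=
      (hFcont.tendsto q).mono_left nhdsWithin_le_nhds
    refine le_of_tendsto htd ?_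
    filter_upwards [self_mem_nhdsWithin] with x hx
    exact (hFlt x hx).le
  have hFltone : ∀ x ∈ Iic q, F x ≤ 1 - ν := fun x hx => hFq ▸ Fmono hx
  have hHnnS : ∀ t ∈ Iic q, 0 ≤ H t := fun t _ => Hnn t
  have hGnn : ∀ x ∈ Iic q, 0 ≤ G x := fun x hx => gsmOn_nonneg H q hHnnS hx
  haveI : Nonempty (Iic q : Set ℝ) := ⟨⟨q, self_mem_Iic⟩⟩
  have hbdd : BddAbove (Set.range fun x : (Iic q : Set ℝ) => F ↑x - expCDF (G ↑x)) := by
    refine ⟨1, ?_⟩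
    rintro v ⟨⟨x, hx⟩, rfl⟩
    have h1 := expCDF_nonneg (hGnn x hx)
    have h2 := Fle1 x
    simp only
    linarith
  have hd_ge : ∀ x, ∀ hx : x ∈ Iic q, F x - expCDF (G x) ≤ d := by
    intro x hx
    rw [hd]
    exact le_ciSup hbdd ⟨x, hx⟩
  have hdpos : 0 < d := by
    have hGa : G a ≤ a * (H b / b) := gsmOn_le_ratio H q hHnnS ha0 hab hbS
    have hHa : a * (H b / b) < H a := by
      have h1 : a * (H b / b) < a * (H a / a) := by
        apply mul_lt_mul_of_pos_left hba ha0
      have he : a * (H a / a) = H a := by field_simp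
      rwa [he] at h1
    have hFa : expCDF (H a) = F a := by
      rw [hHdef]
      exact expCDF_neg_log (by have := hFltone a haS; linarith)
    have hval : 0 < F a - expCDF (G a) := by
      have h1 : expCDF (G a) ≤ expCDF (a * (H b / b)) := expCDF_mono hGa
      have h2 : expCDF (a * (H b / b)) < expCDF (H a) := expCDF_strictMono hHa
      linarith [hFa ▸ (h1.trans_lt h2)]
    exact hval.trans_le (hd_ge a haS)
  refine ⟨hdpos, ?_⟩
  intro ε hε0 hεd
  -- choose x0
  have h8 : d - ε/8 < d := by linarith
  rw [hd] at h8
  obtain ⟨⟨x1, hx1S⟩, hx1⟩ := exists_lt_of_lt_ciSup h8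
  simp only at hx1
  have hGx1nn : 0 ≤ expCDF (G x1) := expCDF_nonneg (hGnn x1 hx1S)
  have hd8 : 0 < d - ε/8 := by linarith
  have hx1pos : 0 < x1 := by
    by_contra hc
    push_neg at hc
    have := Fneg x1 hc
    rw [this] at hx1
    linarith
  obtain ⟨x0, hx0pos, hx0q, hx0g⟩ :
      ∃ x0, 0 < x0 ∧ x0 < q ∧ d - ε/4 < F x0 - expCDF (G x0) := by
    rcases lt_or_eq_of_le (show x1 ≤ q from hx1S) with hlt | heq
    · exact ⟨x1, hx1pos, hlt, by linarith⟩
    · have htd : Tendsto F (𝓝[<] q) (𝓝 (F q)) :=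
        (hFcont.tendsto q).mono_left nhdsWithin_le_nhds
      have hev1 : ∀ᶠ x in 𝓝[<] q, F q - ε/8 < F x :=
        htd.eventually (eventually_gt_nhds (by linarith))
      have hev2 : ∀ᶠ x in 𝓝[<] q, x ∈ Ioo (0:ℝ) q :=
        eventually_of_mem (Ioo_mem_nhdsLT_of_mem ⟨hq0, le_rfl⟩) (fun y hy => hy)
      obtain ⟨x0, hx0F, hx0mem⟩ := (hev1.and hev2).exists
      refine ⟨x0, hx0mem.1, hx0mem.2, ?_⟩
      have hGle : G x0 ≤ G x1 :=
        gsmOn_mono H q hHnnS (heq ▸ hx0mem.2.le) hx1S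
      have hee := expCDF_mono hGle
      have hq_eq : F x1 = F q := by rw [heq]
      linarith
  have hFx0 : F x0 < 1 - ν := hFlt x0 hx0q
  -- the greatest star-shaped minorant lower bound at x0
  set ratio : ℝ → ℝ := fun y => H y / y with hratiodef
  set Rset : ℝ → Set ℝ := fun x => ratio '' (Ioc 0 q ∩ Ici (min x q)) with hRsetdef
  have hRq : ∀ x, ratio q ∈ Rset x := fun x => ⟨q, ⟨⟨hq0, le_rfl⟩, mem_Ici.mpr (min_le_right _ _)⟩, rfl⟩
  have hRne : ∀ x, (Rset x).Nonempty := fun x => ⟨ratio q, hRq x⟩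
  have hRlb : ∀ x, ∀ z ∈ Rset x, 0 ≤ z := by
    rintro x z ⟨y, ⟨⟨hy0, _⟩, _⟩, rfl⟩
    exact div_nonneg (Hnn y) hy0.le
  have hRbdd : ∀ x, BddBelow (Rset x) := fun x => ⟨0, hRlb x⟩
  set R : ℝ → ℝ := fun x => sInf (Rset x) with hRdef
  have hR0 : ∀ x, 0 ≤ R x := fun x => le_csInf (hRne x) (hRlb x)
  have hRmono : Monotone R := by
    intro x1 x2 h
    apply csInf_le_csInf (hRbdd x1) (hRne x2)
    apply image_mono
    apply inter_subset_inter_right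
    exact Ici_subset_Ici.mpr (min_le_min h le_rfl)
  set ψ : ℝ → ℝ := fun x => max x 0 * R x with hψdef
  have hψstar : StarShapedFn ψ := by
    refine ⟨?_, ?_, ?_⟩
    · intro z1 z2 h
      exact mul_le_mul (max_le_max h le_rfl) (hRmono h) (hR0 z1) (le_max_right z2 0)
    · intro x
      exact mul_nonneg (le_max_right x 0) (hR0 x)
    · intro x y hx hxy
      have hy : 0 < y := lt_of_lt_of_le hx hxy
      show max x 0 * R x / x ≤ max y 0 * R y / y
      rw [max_eq_left hx.le, max_eq_left hy.le, mul_comm x (R x), mul_comm y (R y),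
        mul_div_assoc, mul_div_assoc, div_self hx.ne', div_self hy.ne', mul_one, mul_one]
      exact hRmono hxy
  have hψle : ∀ t ∈ Iic q, ψ t ≤ H t := by
    intro t ht
    rcases le_or_gt t 0 with h0 | h0
    · have hz : ψ t = 0 := by
        show max t 0 * R t = 0
        rw [max_eq_right h0, zero_mul]
      rw [hz]
      exact Hnn t
    · have hRt : R t ≤ ratio t :=
        csInf_le (hRbdd t) ⟨t, ⟨⟨h0, ht⟩, mem_Ici.mpr (min_le_left _ _)⟩, rfl⟩
      have hzz : ψ t = t * R t := by
        show max t 0 * R t = t * R t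
        rw [max_eq_left h0.le]
      rw [hzz]
      calc t * R t ≤ t * ratio t := mul_le_mul_of_nonneg_left hRt h0.le
      _ = H t := by
          show t * (H t / t) = H t
          field_simp
  have hGx0m : x0 * R x0 ≤ G x0 := by
    apply le_csSup (gsmSet_bddAbove H q hx0q.le)
    refine ⟨ψ, hψstar, hψle, ?_⟩
    show x0 * R x0 = max x0 0 * R x0
    rw [max_eq_left hx0pos.le]
  set m := R x0 with hmdef
  set dlt := ε / (16 * q) with hdltdef
  have hdltpos : 0 < dlt := by rw [hdltdef]; positivity
  -- choose ys
  obtain ⟨ys, hysx0, hysq, hysr⟩ :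
      ∃ ys, x0 ≤ ys ∧ ys < q ∧ ratio ys < m + dlt := by
    have hsInf : sInf (Rset x0) < m + dlt/2 := by
      have : m = sInf (Rset x0) := rfl
      rw [← this]
      linarith
    obtain ⟨z, hzmem, hzlt⟩ := exists_lt_of_csInf_lt (hRne x0) hsInf
    obtain ⟨y1, ⟨⟨hy10, hy1q⟩, hy1ge'⟩, rfl⟩ := hzmem
    rw [mem_Ici, min_eq_left hx0q.le] at hy1ge'
    rcases lt_or_eq_of_le hy1q with hy1lt | hy1eq
    · exact ⟨y1, hy1ge', hy1lt, by linarith⟩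
    · -- y1 = q : use continuity of the ratio near q from the left
      rw [hy1eq] at hzlt
      have hHcont : ContinuousAt H q := by
        have hc1 : ContinuousAt (fun y => 1 - F y) q :=
          (continuous_const.sub hFcont).continuousAt
        have hc2 : (1:ℝ) - F q ≠ 0 := by rw [hFq]; linarith
        exact (ContinuousAt.comp (x := q) (g := Real.log) (f := fun y => 1 - F y)
          (Real.continuousAt_log hc2) hc1).neg
      have hratio_cont : ContinuousAt ratio q := hHcont.div continuousAt_id hq0.ne'
      have hev1 : ∀ᶠ y in 𝓝[<] q, ratio y < m + dlt :=
        (hratio_cont.tendsto.mono_left nhdsWithin_le_nhds).eventually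
          (eventually_lt_nhds (by linarith))
      have hev2 : ∀ᶠ y in 𝓝[<] q, y ∈ Ioo x0 q :=
        eventually_of_mem (Ioo_mem_nhdsLT_of_mem ⟨hx0q, le_rfl⟩) (fun y hy => hy)
      obtain ⟨ys, hys1, hys2⟩ := (hev1.and hev2).exists
      exact ⟨ys, hys2.1.le, hys2.2, hys1⟩
  have hyspos : 0 < ys := lt_of_lt_of_le hx0pos hysx0
  have hFys : F ys < 1 - ν := hFlt ys hysq
  -- choose η
  set κ : ℝ := ε/16 with hκdef
  have hκpos : 0 < κ := by rw [hκdef]; positivity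
  have hlogcont : ContinuousAt (fun u : ℝ => -Real.log (1 - F ys - u)) 0 := by
    have hc1 : ContinuousAt (fun u : ℝ => 1 - F ys - u) 0 :=
      (continuous_const.sub continuous_id).continuousAt
    have hc2 : (1:ℝ) - F ys - 0 ≠ 0 := by norm_num; linarith
    exact (ContinuousAt.comp (x := (0:ℝ)) (g := Real.log) (f := fun u => 1 - F ys - u)
      (Real.continuousAt_log hc2) hc1).neg
  rw [Metric.continuousAt_iff] at hlogcont
  obtain ⟨δ2, hδ2pos, hδ2⟩ := hlogcont κ hκpos
  set η := min (ε/4) (min ((1 - ν - F ys)/2) (δ2/2)) with hηdef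
  have hηpos : 0 < η :=
    lt_min (by positivity) (lt_min (by linarith) (by linarith))
  have hη1 : η ≤ ε/4 := min_le_left _ _
  have hη2 : η ≤ (1 - ν - F ys)/2 := (min_le_right _ _).trans (min_le_left _ _)
  have hη3' : η < δ2 := lt_of_le_of_lt ((min_le_right _ _).trans (min_le_right _ _))
    (by linarith)
  have hη3 : -Real.log (1 - F ys - η) < -Real.log (1 - F ys) + κ := by
    have hdd : dist η 0 < δ2 := by
      rw [Real.dist_eq, sub_zero, abs_of_pos hηpos]
      exact hη3'
    have h := hδ2 hdd
    rw [Real.dist_eq] at h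
    have h0 : (1:ℝ) - F ys - 0 = 1 - F ys := by ring
    rw [h0] at h
    have := (abs_lt.mp h).2
    linarith
  -- the key deterministic implication
  have key : ∀ n : ℕ, 0 < n → ∀ ω : Ω,
      |empCDF (fun i => Xs n i ω) x0 - F x0| < η →
      |empCDF (fun i => Xs n i ω) ys - F ys| < η →
      d - ε ≤ ⨆ x : (Iic (quantile (empCDF fun i => Xs n i ω) (1 - ν)) : Set ℝ),
        |empCDF (fun i => Xs n i ω) x -
          expCDF (gsmOn (hazEmp fun i => Xs n i ω)
            (Iic (quantile (empCDF fun i => Xs n i ω) (1 - ν))) x)| := by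
    intro n hn ω h1 h2
    set xs := fun i => Xs n i ω with hxsdef
    set qn := quantile (empCDF xs) (1 - ν) with hqndef
    set Hn := hazEmp xs with hHndef
    set Gn := gsmOn Hn (Iic qn) with hGndef
    have hHnnn : ∀ t ∈ Iic qn, 0 ≤ Hn t := fun t _ => hazEmp_nonneg xs t
    have habs1 := abs_lt.mp h1
    have habs2 := abs_lt.mp h2
    have hEys : empCDF xs ys < 1 - ν := by linarith [habs2.2]
    have hysqn : ys ≤ qn := le_quantile_emp hn xs (by linarith) hEys
    have hx0qn : x0 ≤ qn := le_trans hysx0 hysqn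
    have hGn1 : Gn x0 ≤ x0 * (Hn ys / ys) :=
      gsmOn_le_ratio Hn qn hHnnn hx0pos hysx0 hysqn
    have hHys_eq : H ys = -Real.log (1 - F ys) := by rw [hHdef]
    have hHnys : Hn ys ≤ H ys + κ := by
      have hb : 1 - F ys - η ≤ 1 - empCDF xs ys := by linarith [habs2.2]
      have hpos : (0:ℝ) < 1 - F ys - η := by linarith
      have hlog : Real.log (1 - F ys - η) ≤ Real.log (1 - empCDF xs ys) :=
        Real.log_le_log hpos hb
      have hHn_eq : Hn ys = -Real.log (1 - empCDF xs ys) := by rw [hHndef, hazEmp]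
      rw [hHn_eq, hHys_eq]
      linarith
    have hratio_ys : H ys / ys < m + dlt := hysr
    have hchain : x0 * (Hn ys / ys) ≤ G x0 + ε/8 := by
      have e1 : Hn ys / ys ≤ (H ys + κ)/ys :=
        div_le_div_of_nonneg_right hHnys hyspos.le
      have e2 : x0 * (Hn ys / ys) ≤ x0 * ((H ys + κ)/ys) :=
        mul_le_mul_of_nonneg_left e1 hx0pos.le
      have e3 : x0 * ((H ys + κ)/ys) = x0 * (H ys/ys) + κ * (x0/ys) := by ring
      have e4 : x0 * (H ys / ys) ≤ x0 * (m + dlt) :=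
        mul_le_mul_of_nonneg_left hratio_ys.le hx0pos.le
      have e6 : x0 * dlt ≤ q * dlt :=
        mul_le_mul_of_nonneg_right (by linarith) hdltpos.le
      have e7 : q * dlt = ε/16 := by
        rw [hdltdef]
        field_simp
      have e8 : κ * (x0/ys) ≤ κ * 1 := by
        apply mul_le_mul_of_nonneg_left _ hκpos.le
        rw [div_le_one hyspos]
        exact hysx0
      have e9 : x0 * (m + dlt) = x0 * m + x0 * dlt := by ring
      have e10 : x0 * m ≤ G x0 := hGx0m
      have e11 : κ * 1 = ε / 16 := by rw [hκdef]; ring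
      linarith
    have hGn2 : expCDF (Gn x0) ≤ expCDF (G x0) + ε/8 :=
      (expCDF_mono (hGn1.trans hchain)).trans
        (expCDF_add_le (hGnn x0 (le_of_lt hx0q)) (by positivity))
    have hval : d - ε ≤ empCDF xs x0 - expCDF (Gn x0) := by
      have hE1 : F x0 - ε/4 < empCDF xs x0 := by linarith [habs1.1]
      linarith
    haveI : Nonempty (Iic qn : Set ℝ) := ⟨⟨qn, self_mem_Iic⟩⟩
    have hbddn : BddAbove (Set.range fun x : (Iic qn : Set ℝ) =>
        |empCDF xs ↑x - expCDF (Gn ↑x)|) := by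
      refine ⟨1, ?_⟩
      rintro v ⟨⟨x, hx⟩, rfl⟩
      have hh1 := empCDF_nonneg xs x
      have hh2 := empCDF_le_one xs x
      have hh3 := expCDF_nonneg (gsmOn_nonneg Hn qn hHnnn hx)
      have hh4 := expCDF_le_one (Gn x)
      simp only
      rw [abs_le]
      constructor <;> [linarith; linarith]
    refine le_trans hval (le_trans (le_abs_self _) ?_)
    exact le_ciSup hbddn ⟨x0, hx0qn⟩
  -- measurability of bad events
  have hmeasemp : ∀ (n : ℕ) (t : ℝ), Measurable fun ω => empCDF (fun i => Xs n i ω) t :=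
    fun n t => empCDF_measurable (Xs n) (hXs n).1 t
  have hBadmeas : ∀ (n : ℕ) (t p : ℝ),
      MeasurableSet {ω | η ≤ |empCDF (fun i => Xs n i ω) t - p|} := by
    intro n t p
    apply measurableSet_le measurable_const
    exact continuous_abs.measurable.comp ((hmeasemp n t).sub measurable_const)
  have hBadP : ∀ n : ℕ, 0 < n → ∀ t : ℝ,
      P {ω | η ≤ |empCDF (fun i => Xs n i ω) t - F t|} ≤ ENNReal.ofReal (1/(n*η^2)) :=
    fun n hn t => cheb P μ hn (Xs n) (hXs n) t hηpos
  -- lower bound for the probability of the event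
  have hlow : ∀ n : ℕ, 0 < n → 1 - 2/(n*η^2) ≤
      (P {ω | d - ε ≤ ⨆ x : (Iic (quantile (empCDF fun i => Xs n i ω) (1 - ν)) : Set ℝ),
        |empCDF (fun i => Xs n i ω) x -
          expCDF (gsmOn (hazEmp fun i => Xs n i ω)
            (Iic (quantile (empCDF fun i => Xs n i ω) (1 - ν))) x)|}).toReal := by
    intro n hn
    set E := {ω | d - ε ≤ ⨆ x : (Iic (quantile (empCDF fun i => Xs n i ω) (1 - ν)) : Set ℝ),
        |empCDF (fun i => Xs n i ω) x -
          expCDF (gsmOn (hazEmp fun i => Xs n i ω)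
            (Iic (quantile (empCDF fun i => Xs n i ω) (1 - ν))) x)|} with hEdef
    set B1 := {ω | η ≤ |empCDF (fun i => Xs n i ω) x0 - F x0|} with hB1def
    set B2 := {ω | η ≤ |empCDF (fun i => Xs n i ω) ys - F ys|} with hB2def
    have hsub : (B1 ∪ B2)ᶜ ⊆ E := by
      intro ω hω
      rw [Set.mem_compl_iff, Set.mem_union] at hω
      push_neg at hω
      rw [hB1def, mem_setOf_eq, not_le] at hω
      have hω2 := hω.2
      rw [hB2def, mem_setOf_eq, not_le] at hω2
      exact key n hn ω hω.1 hω2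
    have hm : MeasurableSet (B1 ∪ B2) := (hBadmeas n x0 (F x0)).union (hBadmeas n ys (F ys))
    have h1 : P ((B1 ∪ B2)ᶜ) ≤ P E := measure_mono hsub
    have h2 : (P ((B1 ∪ B2)ᶜ)).toReal = 1 - (P (B1 ∪ B2)).toReal := by
      rw [measure_compl hm (measure_ne_top _ _), measure_univ,
        ENNReal.toReal_sub_of_le prob_le_one ENNReal.one_ne_top, ENNReal.toReal_one]
    have h3 : (P (B1 ∪ B2)).toReal ≤ 2/(n*η^2) := by
      have hu := measure_union_le (μ := P) B1 B2
      have hb : P (B1 ∪ B2) ≤ ENNReal.ofReal (1/(n*η^2)) + ENNReal.ofReal (1/(n*η^2)) :=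
        hu.trans (add_le_add (hBadP n hn x0) (hBadP n hn ys))
      rw [← ENNReal.ofReal_add (by positivity) (by positivity)] at hb
      have hb2 := ENNReal.toReal_le_of_le_ofReal (by positivity) hb
      have heq : 1/((n:ℝ)*η^2) + 1/(n*η^2) = 2/(n*η^2) := by ring
      linarith
    have h4 : (P ((B1 ∪ B2)ᶜ)).toReal ≤ (P E).toReal :=
      ENNReal.toReal_mono (measure_ne_top _ _) h1
    linarith
  -- squeeze
  have htend : Tendsto (fun n : ℕ => 1 - 2/(n*η^2)) atTop (𝓝 (1:ℝ)) := by
    have h0 : Tendsto (fun n : ℕ => 2/((n:ℝ)*η^2)) atTop (𝓝 0) := by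
      have hc := tendsto_const_div_atTop_nhds_zero_nat (2/η^2)
      have heq : (fun n : ℕ => 2/η^2/(n:ℝ)) = fun n : ℕ => 2/((n:ℝ)*η^2) := by
        funext n
        rw [div_div, mul_comm]
      rwa [heq] at hc
    have := h0.const_sub (1:ℝ)
    simpa using this
  refine tendsto_of_tendsto_of_tendsto_of_le_of_le' htend tendsto_const_nhds ?_ ?_
  · filter_upwards [eventually_gt_atTop 0] with n hn
    exact hlow n hn
  · filter_upwards with n
    have h := prob_le_one (μ := P)
      (s := {ω | d - ε ≤ ⨆ x : (Iic (quantile (empCDF fun i => Xs n i ω) (1 - ν)) : Set ℝ),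
        |empCDF (fun i => Xs n i ω) x -
          expCDF (gsmOn (hazEmp fun i => Xs n i ω)
            (Iic (quantile (empCDF fun i => Xs n i ω) (1 - ν))) x)|})
    have := ENNReal.toReal_mono ENNReal.one_ne_top h
    simpa using this
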